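/- arXiv:2307.06889 — 4 statements merged into one kernel-verified Lean document; each statement's English description precedes it below -/
import Mathlib

section
/- For a vaccinated set S in a rooted tree, the expected total reward satisfies r(S) = Σ_{i∈S} |N_i \ ∪_{j ∈ N_i ∩ S} N_j| · P(Z_i > τ), i.e., each node's contribution counts only descendants not already covered by vaccinated descendants of i. -/
open MeasureTheory ProbabilityTheory

/-- A finite rooted tree given by a parent function. -/
structure ParentTree (V : Type*) where
  root : V
  parent : V → V
  parent_root : parent root = root
  reaches_root : ∀ v, ∃ n, parent^[n] v = root
  acyclic : ∀ v n, 0 < n → parent^[n] v = v → v = root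

namespace ParentTree

variable {V : Type*}

/-- `anc i j` : `i` is a strict ancestor of `j`. -/
def anc (T : ParentTree V) (i j : V) : Prop :=
  i ≠ j ∧ ∃ n, T.parent^[n] j = i

/-- The set of strict descendants of `i`. -/
def desc (T : ParentTree V) (i : V) : Set V := {v | T.anc i v}

/-- The number of strict descendants of `i`. -/
noncomputable def nd (T : ParentTree V) (i : V) : ℕ := (T.desc i).ncard

/-- The expected total reward of vaccinating the set `S`, where `p i = P(Z_i > τ)`. -/
noncomputable def reward (T : ParentTree V) (p : V → ℝ) (S : Finset V) : ℝ :=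
  ∑ i ∈ S, ((T.nd i : ℝ) - ((⋃ j ∈ T.desc i ∩ (S : Set V), T.desc j).ncard : ℝ)) * p i

end ParentTree

open ParentTree MeasureTheory ProbabilityTheory

section Aux

open scoped Classical

variable {V : Type*} (T : ParentTree V)

noncomputable def auxDepth (v : V) : ℕ := Nat.find (T.reaches_root v)

lemma auxDepth_spec (v : V) : T.parent^[auxDepth T v] v = T.root := Nat.find_spec (T.reaches_root v)

lemma auxDepth_le {v : V} {n : ℕ} (h : T.parent^[n] v = T.root) : auxDepth T v ≤ n :=
  Nat.find_le (p := fun n => T.parent^[n] v = T.root) h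

lemma iterate_root (n : ℕ) : T.parent^[n] T.root = T.root :=
  Function.iterate_fixed T.parent_root n

lemma auxDepth_pos {v : V} (h : v ≠ T.root) : 0 < auxDepth T v := by
  rcases Nat.eq_zero_or_pos (auxDepth T v) with h0 | h0
  · have := auxDepth_spec T v; rw [h0] at this; exact absurd this h
  · exact h0

lemma auxDepth_parent_lt {v : V} (h : v ≠ T.root) :
    auxDepth T (T.parent v) < auxDepth T v := by
  have hpos := auxDepth_pos T h
  obtain ⟨m, hm⟩ : ∃ m, auxDepth T v = m + 1 := ⟨auxDepth T v - 1, by omega⟩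
  have hspec := auxDepth_spec T v
  rw [hm, Function.iterate_succ_apply] at hspec
  have : auxDepth T (T.parent v) ≤ m := auxDepth_le T hspec
  omega

lemma auxDepth_iterate_le (n : ℕ) : ∀ v, auxDepth T (T.parent^[n] v) ≤ auxDepth T v := by
  induction n with
  | zero => intro v; simp
  | succ n ih =>
    intro v
    by_cases h : v = T.root
    · subst h; rw [iterate_root]
    · rw [Function.iterate_succ_apply]
      exact le_trans (ih (T.parent v)) (auxDepth_parent_lt T h).le

lemma auxDepth_iterate_lt {n : ℕ} (hn : n ≠ 0) {v : V} (h : v ≠ T.root) :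
    auxDepth T (T.parent^[n] v) < auxDepth T v := by
  obtain ⟨m, rfl⟩ := Nat.exists_eq_succ_of_ne_zero hn
  rw [Function.iterate_succ_apply]
  exact lt_of_le_of_lt (auxDepth_iterate_le T m _) (auxDepth_parent_lt T h)

lemma anc_auxDepth_lt {i j : V} (h : T.anc i j) : auxDepth T i < auxDepth T j := by
  obtain ⟨hne, n, hn⟩ := h
  have hn0 : n ≠ 0 := by rintro rfl; exact hne (by simpa using hn.symm)
  have hj : j ≠ T.root := by
    rintro rfl; rw [iterate_root] at hn; exact hne hn.symm
  rw [← hn]; exact auxDepth_iterate_lt T hn0 hj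

lemma anc_trans {i j k : V} (hij : T.anc i j) (hjk : T.anc j k) : T.anc i k := by
  obtain ⟨n, hn⟩ := hij.2
  obtain ⟨m, hm⟩ := hjk.2
  refine ⟨?_, n + m, by rw [Function.iterate_add_apply, hm, hn]⟩
  rintro rfl
  exact absurd (anc_auxDepth_lt T hij) (Nat.not_lt.mpr (anc_auxDepth_lt T hjk).le)

lemma anc_chain {i j w : V} (hi : T.anc i w) (hj : T.anc j w) :
    i = j ∨ T.anc i j ∨ T.anc j i := by
  obtain ⟨hi', n, hn⟩ := hi
  obtain ⟨hj', m, hm⟩ := hj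
  by_cases hij : i = j
  · exact Or.inl hij
  rcases Nat.le_total n m with h | h
  · obtain ⟨k, rfl⟩ := Nat.exists_eq_add_of_le h
    refine Or.inr (Or.inr ⟨Ne.symm hij, k, ?_⟩)
    rw [← hn, ← Function.iterate_add_apply, Nat.add_comm]
    exact hm
  · obtain ⟨k, rfl⟩ := Nat.exists_eq_add_of_le h
    refine Or.inr (Or.inl ⟨hij, k, ?_⟩)
    rw [← hm, ← Function.iterate_add_apply, Nat.add_comm]
    exact hn

lemma ncard_biUnion_finset {α β : Type*} [Fintype β] (s : Finset α) (f : α → Set β)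
    (hdisj : ∀ i ∈ s, ∀ j ∈ s, i ≠ j → Disjoint (f i) (f j)) :
    (⋃ i ∈ s, f i).ncard = ∑ i ∈ s, (f i).ncard := by
  induction s using Finset.induction with
  | empty => simp
  | @insert a s hx ih =>
    rw [Finset.sum_insert hx]
    have heq : (⋃ i ∈ insert a s, f i) = f a ∪ ⋃ i ∈ s, f i := by
      simp [Set.biUnion_insert]
    rw [heq, Set.ncard_union_eq ?_ (Set.toFinite _) (Set.toFinite _),
      ih (fun i hi j hj hij => hdisj i (Finset.mem_insert_of_mem hi) j
        (Finset.mem_insert_of_mem hj) hij)]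
    refine Set.disjoint_iUnion₂_right.mpr fun i hi => ?_
    exact hdisj a (Finset.mem_insert_self a s) i (Finset.mem_insert_of_mem hi)
      (fun h => hx (h ▸ hi))

lemma expMeasure_Iio_zero {lam : ℝ} : expMeasure lam (Set.Iio 0) = 0 := by
  rw [expMeasure, gammaMeasure, withDensity_apply _ measurableSet_Iio]
  exact lintegral_gammaPDF_of_nonpos le_rfl

end Aux

/-- In a finite rooted tree where infection starts at the root at time 0 and spreads along
edges with i.i.d. `Exp(λ)` delays (so `Z_i` is the sum of the delays on the root-to-`i`
path), and `τ` is an independent random immunization time, the expected number of saved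
nodes when vaccinating the set `S` equals
`Σ_{i∈S} |N_i \ ∪_{j ∈ N_i ∩ S} N_j| · P(Z_i > τ)`. -/
theorem expected_total_reward
    {V : Type*} [Fintype V] (T : ParentTree V)
    {Ω : Type*} [MeasureSpace Ω] [IsProbabilityMeasure (ℙ : Measure Ω)]
    (lam : ℝ) (hlam : 0 < lam)
    (Z W : V → Ω → ℝ) (τ : Ω → ℝ)
    (hWmeas : ∀ v, Measurable (W v)) (hτmeas : Measurable τ)
    (hWdist : ∀ v, v ≠ T.root → Measure.map (W v) ℙ = expMeasure lam)
    (hindep : iIndepFun (Sum.elim W (fun _ : Unit => τ)) ℙ)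
    (hZroot : ∀ ω, Z T.root ω = 0)
    (hZ : ∀ v, v ≠ T.root → ∀ ω, Z v ω = Z (T.parent v) ω + W v ω)
    (S : Finset V) :
    ∫ ω, (({w | ∃ i ∈ S, w ∈ T.desc i ∧ τ ω < Z i ω} : Set V).ncard : ℝ) ∂ℙ
      = ∑ i ∈ S, ((T.desc i \ ⋃ j ∈ T.desc i ∩ (S : Set V), T.desc j).ncard : ℝ)
          * (ℙ {ω | τ ω < Z i ω}).toReal := by
  classical
  -- measurability of Z
  have hZmeas : ∀ v, Measurable (Z v) := by
    have key : ∀ n v, auxDepth T v ≤ n → Measurable (Z v) := by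
      intro n
      induction n with
      | zero =>
        intro v hv
        have hroot : v = T.root := by
          by_contra h; have := auxDepth_pos T h; omega
        subst hroot
        rw [show Z T.root = fun _ => (0:ℝ) from funext hZroot]
        exact measurable_const
      | succ n ih =>
        intro v hv
        by_cases h : v = T.root
        · subst h
          rw [show Z T.root = fun _ => (0:ℝ) from funext hZroot]
          exact measurable_const
        · rw [show Z v = fun ω => Z (T.parent v) ω + W v ω from funext (hZ v h)]
          exact (ih _ (by have := auxDepth_parent_lt T h; omega)).add (hWmeas v)
    exact fun v => key (auxDepth T v) v le_rfl
  have hsets : ∀ i, MeasurableSet {ω | τ ω < Z i ω} :=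
    fun i => measurableSet_lt hτmeas (hZmeas i)
  -- a.e. nonnegativity of all W
  have hWae : ∀ᵐ ω ∂ℙ, ∀ v, v ≠ T.root → 0 ≤ W v ω := by
    rw [MeasureTheory.ae_all_iff]
    intro v
    by_cases h : v = T.root
    · filter_upwards with ω hv; exact absurd h hv
    · have hnull : ℙ {ω | W v ω < 0} = 0 := by
        have : {ω | W v ω < 0} = W v ⁻¹' Set.Iio 0 := rfl
        rw [this, ← Measure.map_apply (hWmeas v) measurableSet_Iio, hWdist v h,
          expMeasure_Iio_zero]
      have : ∀ᵐ ω ∂ℙ, ¬ (W v ω < 0) := by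
        rw [MeasureTheory.ae_iff]; simpa using hnull
      filter_upwards [this] with ω hω _
      exact not_lt.mp hω
  -- Z is monotone along ancestry for good ω
  have hmono : ∀ ω, (∀ v, v ≠ T.root → 0 ≤ W v ω) →
      ∀ i j, T.anc i j → Z i ω ≤ Z j ω := by
    intro ω hω i j hij
    have key : ∀ n, ∀ v, Z (T.parent^[n] v) ω ≤ Z v ω := by
      intro n
      induction n with
      | zero => intro v; simp
      | succ n ih =>
        intro v
        by_cases h : v = T.root
        · subst h; rw [iterate_root]
        · rw [Function.iterate_succ_apply]
          refine le_trans (ih (T.parent v)) ?_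
          have := hZ v h ω
          have := hω v h
          linarith
    obtain ⟨_, n, hn⟩ := hij
    rw [← hn]; exact key n j
  set A : V → Set V := fun i => T.desc i \ ⋃ j ∈ T.desc i ∩ (S : Set V), T.desc j with hA
  -- the A i are pairwise disjoint over S
  have hAdisj : ∀ i ∈ S, ∀ j ∈ S, i ≠ j → Disjoint (A i) (A j) := by
    intro i hi j hj hij
    rw [Set.disjoint_left]
    rintro w ⟨hwi, hwi'⟩ ⟨hwj, hwj'⟩
    rcases anc_chain T hwi hwj with h | h | h
    · exact hij h
    · -- i anc j : then j ∈ desc i ∩ S and w ∈ desc j, contradicting w ∈ A i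
      exact hwi' (Set.mem_biUnion (Set.mem_inter h hj) hwj)
    · exact hwj' (Set.mem_biUnion (Set.mem_inter h hi) hwi)
  -- pointwise identity for good ω
  have key : ∀ ω, (∀ v, v ≠ T.root → 0 ≤ W v ω) →
      ({w | ∃ i ∈ S, w ∈ T.desc i ∧ τ ω < Z i ω} : Set V)
        = ⋃ i ∈ S.filter (fun i => τ ω < Z i ω), A i := by
    intro ω hω
    ext w
    simp only [Set.mem_setOf_eq, Set.mem_iUnion, Finset.mem_filter, exists_prop]
    constructor
    · rintro ⟨i, hiS, hiw, hiτ⟩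
      set B := S.filter (fun i => T.anc i w) with hB
      have hBne : B.Nonempty := ⟨i, Finset.mem_filter.mpr ⟨hiS, hiw⟩⟩
      obtain ⟨i₀, hi₀B, hi₀max⟩ := B.exists_max_image (auxDepth T) hBne
      have hi₀S : i₀ ∈ S := (Finset.mem_filter.mp hi₀B).1
      have hi₀w : T.anc i₀ w := (Finset.mem_filter.mp hi₀B).2
      have hτ₀ : τ ω < Z i₀ ω := by
        rcases anc_chain T hiw hi₀w with h | h | h
        · rwa [← h]
        · exact lt_of_lt_of_le hiτ (hmono ω hω i i₀ h)
        · exact absurd (anc_auxDepth_lt T h)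
            (Nat.not_lt.mpr (hi₀max i (Finset.mem_filter.mpr ⟨hiS, hiw⟩)))
      refine ⟨i₀, ⟨hi₀S, hτ₀⟩, hi₀w, ?_⟩
      intro hmem
      rw [Set.mem_iUnion₂] at hmem
      obtain ⟨j, ⟨hji, hjS⟩, hwj⟩ := hmem
      have hjB : j ∈ B := Finset.mem_filter.mpr ⟨hjS, hwj⟩
      exact absurd (anc_auxDepth_lt T hji) (Nat.not_lt.mpr (hi₀max j hjB))
    · rintro ⟨i, ⟨hiS, hiτ⟩, hwi, _⟩
      exact ⟨i, hiS, hwi, hiτ⟩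
  -- a.e. equality of integrands
  have hae : ∀ᵐ ω ∂ℙ,
      (({w | ∃ i ∈ S, w ∈ T.desc i ∧ τ ω < Z i ω} : Set V).ncard : ℝ)
        = ∑ i ∈ S, Set.indicator {ω | τ ω < Z i ω}
            (fun _ => ((A i).ncard : ℝ)) ω := by
    filter_upwards [hWae] with ω hω
    rw [key ω hω, ncard_biUnion_finset _ _
      (fun i hi j hj hij => hAdisj i (Finset.mem_filter.mp hi).1 j
        (Finset.mem_filter.mp hj).1 hij)]
    push_cast
    rw [Finset.sum_filter]
    refine Finset.sum_congr rfl fun i _ => ?_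
    simp [Set.indicator_apply]
  rw [integral_congr_ae hae,
    integral_finset_sum S (fun i _ => (integrable_const _).indicator (hsets i))]
  refine Finset.sum_congr rfl fun i _ => ?_
  rw [integral_indicator_const _ (hsets i), smul_eq_mul, mul_comm, hA]
  rfl
end

section
/- The reward function r is submodular: for S₁ ⊆ S₂ ⊆ V and u ∉ S₂, the marginal gains satisfy r(S₁ ∪ {u}) - r(S₁) ≥ r(S₂ ∪ {u}) - r(S₂). -/
open MeasureTheory ProbabilityTheory

open ParentTree

namespace ParentTree

variable {V : Type*} [DecidableEq V] (T : ParentTree V)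

lemma anc_irrefl (i : V) : ¬ T.anc i i := fun h => h.1 rfl

lemma not_anc_of_anc {i j : V} (h : T.anc i j) : ¬ T.anc j i := by
  rintro ⟨hne, n, hn⟩
  obtain ⟨hne', m, hm⟩ := h
  have hmpos : 0 < m := by
    rcases Nat.eq_zero_or_pos m with rfl | h; · simp at hm; exact absurd hm.symm hne'
    · assumption
  have hnpos : 0 < n := by
    rcases Nat.eq_zero_or_pos n with rfl | h; · simp at hn; exact absurd hn.symm hne
    · assumption
  have h1 : T.parent^[m + n] i = i := by
    rw [Function.iterate_add_apply, hn, hm]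
  have h2 : T.parent^[n + m] j = j := by
    rw [Function.iterate_add_apply, hm, hn]
  have := T.acyclic i (m + n) (by omega) h1
  have := T.acyclic j (n + m) (by omega) h2
  exact hne' (by rw [‹i = T.root›, ‹j = T.root›])

lemma anc_trans {i j k : V} (h1 : T.anc i j) (h2 : T.anc j k) : T.anc i k := by
  obtain ⟨hne1, m, hm⟩ := h1
  obtain ⟨hne2, n, hn⟩ := h2
  refine ⟨?_, m + n, by rw [Function.iterate_add_apply, hn, hm]⟩
  rintro rfl
  exact T.not_anc_of_anc ⟨hne1, m, hm⟩ ⟨hne2, n, hn⟩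

lemma anc_trichotomy {a b u : V} (ha : T.anc a u) (hb : T.anc b u) :
    a = b ∨ T.anc a b ∨ T.anc b a := by
  obtain ⟨hnea, m, hm⟩ := ha
  obtain ⟨hneb, n, hn⟩ := hb
  rcases le_total m n with h | h
  · have : T.parent^[n - m] a = b := by
      rw [← hm, ← Function.iterate_add_apply, Nat.sub_add_cancel h, hn]
    by_cases hab : a = b
    · exact Or.inl hab
    · exact Or.inr (Or.inr ⟨fun h' => hab h'.symm, n - m, this⟩)
  · have : T.parent^[m - n] b = a := by
      rw [← hn, ← Function.iterate_add_apply, Nat.sub_add_cancel h, hm]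
    by_cases hab : a = b
    · exact Or.inl hab
    · exact Or.inr (Or.inl ⟨hab, m - n, this⟩)

lemma mem_desc {i v : V} : v ∈ T.desc i ↔ T.anc i v := Iff.rfl

lemma not_mem_desc_self (i : V) : i ∉ T.desc i := T.anc_irrefl i

lemma desc_subset {i j : V} (h : T.anc i j) : T.desc j ⊆ T.desc i :=
  fun _ hv => T.anc_trans h hv

/-- The union `∪_{j ∈ N_i ∩ S} N_j` appearing in the reward. -/
def Aset (S : Finset V) (i : V) : Set V := ⋃ j ∈ T.desc i ∩ (S : Set V), T.desc j

lemma reward_eq (p : V → ℝ) (S : Finset V) :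
    T.reward p S = ∑ i ∈ S, ((T.nd i : ℝ) - ((T.Aset S i).ncard : ℝ)) * p i := rfl

lemma Aset_subset_desc (S : Finset V) (i : V) : T.Aset S i ⊆ T.desc i :=
  Set.iUnion₂_subset fun _ hj => T.desc_subset hj.1

lemma Aset_mono {S S' : Finset V} (h : S ⊆ S') (i : V) : T.Aset S i ⊆ T.Aset S' i :=
  Set.biUnion_subset_biUnion_left (Set.inter_subset_inter_right _ (by exact_mod_cast h))

lemma Aset_anti_anc {i u : V} (h : T.anc i u) (S : Finset V) : T.Aset S u ⊆ T.Aset S i :=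
  Set.biUnion_subset_biUnion_left
    (Set.inter_subset_inter_left _ (T.desc_subset h))

lemma desc_subset_Aset {S : Finset V} {i j u : V} (hj : j ∈ S) (hij : T.anc i j)
    (hju : T.anc j u) : T.desc u ⊆ T.Aset S i :=
  (T.desc_subset hju).trans
    (Set.subset_biUnion_of_mem (u := fun j => T.desc j)
      (show j ∈ T.desc i ∩ (S : Set V) from ⟨hij, hj⟩))

lemma Aset_insert_of_not_anc {i u : V} (h : ¬ T.anc i u) (S : Finset V) :
    T.Aset (insert u S) i = T.Aset S i := by
  have hset : T.desc i ∩ ((insert u S : Finset V) : Set V) = T.desc i ∩ (S : Set V) := by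
    ext v
    simp only [Finset.coe_insert, Set.mem_inter_iff, Set.mem_insert_iff, Finset.mem_coe]
    constructor
    · rintro ⟨hv, rfl | hv'⟩
      · exact absurd hv h
      · exact ⟨hv, hv'⟩
    · rintro ⟨hv, hv'⟩; exact ⟨hv, Or.inr hv'⟩
  unfold Aset
  rw [hset]

lemma Aset_insert_of_anc {i u : V} (h : T.anc i u) (S : Finset V) :
    T.Aset (insert u S) i = T.desc u ∪ T.Aset S i := by
  unfold Aset
  have : T.desc i ∩ ((insert u S : Finset V) : Set V) = insert u (T.desc i ∩ (S : Set V)) := by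
    ext v
    simp only [Finset.coe_insert, Set.mem_inter_iff, Set.mem_insert_iff, Finset.mem_coe]
    constructor
    · rintro ⟨hv, rfl | hv'⟩
      · exact Or.inl rfl
      · exact Or.inr ⟨hv, hv'⟩
    · rintro (rfl | ⟨hv, hv'⟩)
      · exact ⟨h, Or.inl rfl⟩
      · exact ⟨hv, Or.inr hv'⟩
  rw [this, Set.biUnion_insert]

lemma Aset_insert_self {u : V} (S : Finset V) : T.Aset (insert u S) u = T.Aset S u :=
  T.Aset_insert_of_not_anc (T.anc_irrefl u) S

/-- In the "nearest ancestor" case the relevant difference sets agree. -/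
lemma diff_eq_of_nearest {S : Finset V} {i u : V} (hiu : T.anc i u) (hu : u ∉ S)
    (hnear : ∀ j ∈ S, ¬(T.anc i j ∧ T.anc j u)) :
    T.desc u \ T.Aset S i = T.desc u \ T.Aset S u := by
  ext v
  simp only [Set.mem_diff, and_congr_right_iff]
  intro hv
  constructor
  · intro h1 h2
    exact h1 (T.Aset_anti_anc hiu S h2)
  · intro h1 h2
    apply h1
    obtain ⟨j, hj, hvj⟩ := Set.mem_iUnion₂.mp h2
    obtain ⟨hji : T.anc i j, hjS⟩ := hj
    -- j and u are both ancestors of v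
    rcases T.anc_trichotomy (hvj : T.anc j v) hv with rfl | hju | huj
    · exact absurd hjS hu
    · exact absurd ⟨hji, hju⟩ (hnear j hjS)
    · exact Set.mem_iUnion₂.mpr ⟨j, ⟨huj, hjS⟩, hvj⟩

end ParentTree

namespace ParentTree

variable {V : Type*} [DecidableEq V] (T : ParentTree V)

/-- A nonempty set of ancestors of `u` inside `S` contains a nearest one. -/
lemma exists_nearest {S : Finset V} {u a : V} (ha : a ∈ S) (hau : T.anc a u) :
    ∃ b ∈ S, T.anc b u ∧ ∀ j ∈ S, ¬(T.anc b j ∧ T.anc j u) := by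
  classical
  set W : Finset V := S.filter (fun i => T.anc i u) with hW
  have haW : a ∈ W := by simp [hW, ha, hau]
  set d : V → ℕ := fun i =>
    if h : ∃ n, T.parent^[n] u = i then Nat.find h else 0 with hd
  obtain ⟨b, hbW, hmin⟩ := W.exists_min_image d ⟨a, haW⟩
  have hbS : b ∈ S := (Finset.mem_filter.mp hbW).1
  have hbu : T.anc b u := (Finset.mem_filter.mp hbW).2
  refine ⟨b, hbS, hbu, ?_⟩
  rintro j hjS ⟨hbj, hju⟩
  have hjW : j ∈ W := by simp [hW, hjS, hju]
  have hle : d b ≤ d j := hmin j hjW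
  have hb' : ∃ n, T.parent^[n] u = b := hbu.2
  have hj' : ∃ n, T.parent^[n] u = j := hju.2
  have hdb : d b = Nat.find hb' := by simp [hd, hb']
  have hdj : d j = Nat.find hj' := by simp [hd, hj']
  have hspecb : T.parent^[Nat.find hb'] u = b := Nat.find_spec hb'
  have hspecj : T.parent^[Nat.find hj'] u = j := Nat.find_spec hj'
  have hkey : T.parent^[Nat.find hj' - Nat.find hb'] b = j := by
    have h2 : T.parent^[(Nat.find hj' - Nat.find hb') + Nat.find hb'] u = j := by
      rw [Nat.sub_add_cancel (by omega)]; exact hspecj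
    rwa [Function.iterate_add_apply, hspecb] at h2
  have : T.anc j b := ⟨fun h => T.anc_irrefl b (h ▸ hbj), _, hkey⟩
  exact T.not_anc_of_anc hbj this

/-- Only one nearest ancestor. -/
lemma nearest_unique {S : Finset V} {u a b : V} (ha : a ∈ S) (hb : b ∈ S)
    (hau : T.anc a u) (hbu : T.anc b u)
    (hna : ∀ j ∈ S, ¬(T.anc a j ∧ T.anc j u))
    (hnb : ∀ j ∈ S, ¬(T.anc b j ∧ T.anc j u)) : a = b := by
  rcases T.anc_trichotomy hau hbu with h | h | h
  · exact h
  · exact absurd ⟨h, hbu⟩ (hna b hb)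
  · exact absurd ⟨h, hau⟩ (hnb a ha)

open Classical in
/-- The marginal-gain formula. -/
lemma marginal_eq [Fintype V] (p : V → ℝ) (S : Finset V) (u : V) (hu : u ∉ S) :
    T.reward p (insert u S) - T.reward p S =
      ((T.desc u \ T.Aset S u).ncard : ℝ) *
        (p u - ∑ i ∈ S,
          (if T.anc i u ∧ ∀ j ∈ S, ¬(T.anc i j ∧ T.anc j u) then p i else 0)) := by
  set c : ℝ := ((T.desc u \ T.Aset S u).ncard : ℝ) with hc
  set P : V → Prop := fun i => T.anc i u ∧ ∀ j ∈ S, ¬(T.anc i j ∧ T.anc j u) with hP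
  -- the coefficient at u
  have hcu : (T.nd u : ℝ) - ((T.Aset S u).ncard : ℝ) = c := by
    have := Set.ncard_diff_add_ncard_of_subset (T.Aset_subset_desc S u)
    have : ((T.desc u \ T.Aset S u).ncard : ℝ) + ((T.Aset S u).ncard : ℝ)
        = ((T.desc u).ncard : ℝ) := by exact_mod_cast this
    unfold nd; linarith
  -- per-term cardinality change
  have hA' : ∀ i ∈ S, ((T.Aset (insert u S) i).ncard : ℝ)
      = ((T.Aset S i).ncard : ℝ) + (if P i then c else 0) := by
    intro i hi
    by_cases hiu : T.anc i u
    · by_cases hnear : ∀ j ∈ S, ¬(T.anc i j ∧ T.anc j u)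
      · rw [if_pos ⟨hiu, hnear⟩]
        rw [T.Aset_insert_of_anc hiu S]
        have hun : T.desc u ∪ T.Aset S i = T.Aset S i ∪ (T.desc u \ T.Aset S i) := by
          rw [Set.union_diff_self, Set.union_comm]
        rw [hun, Set.ncard_union_eq Set.disjoint_sdiff_right,
          T.diff_eq_of_nearest hiu hu hnear]
        push_cast; ring
      · rw [if_neg (by simp only [hP]; tauto)]
        push_neg at hnear
        obtain ⟨j, hjS, hij, hju⟩ := hnear
        rw [T.Aset_insert_of_anc hiu S,
          Set.union_eq_self_of_subset_left (T.desc_subset_Aset hjS hij hju)]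
        ring
    · rw [if_neg (by simp only [hP]; tauto), T.Aset_insert_of_not_anc hiu S]
      ring
  rw [T.reward_eq, T.reward_eq, Finset.sum_insert hu, T.Aset_insert_self, hcu]
  have h1 : ∑ i ∈ S, ((T.nd i : ℝ) - ((T.Aset (insert u S) i).ncard : ℝ)) * p i
      = ∑ i ∈ S, (((T.nd i : ℝ) - ((T.Aset S i).ncard : ℝ)) * p i
          - (if P i then p i else 0) * c) := by
    refine Finset.sum_congr rfl fun i hi => ?_
    rw [hA' i hi]
    by_cases h : P i
    · rw [if_pos h, if_pos h]; ring
    · rw [if_neg h, if_neg h]; ring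
  rw [h1, Finset.sum_sub_distrib, ← Finset.sum_mul]
  ring

end ParentTree

namespace ParentTree

variable {V : Type*} [DecidableEq V] (T : ParentTree V)

lemma sum_nearest (p : V → ℝ) {S : Finset V} {u a : V}
    [∀ i, Decidable (T.anc i u ∧ ∀ j ∈ S, ¬(T.anc i j ∧ T.anc j u))]
    (haS : a ∈ S) (hau : T.anc a u)
    (hnear : ∀ j ∈ S, ¬(T.anc a j ∧ T.anc j u)) :
    (∑ i ∈ S, if T.anc i u ∧ ∀ j ∈ S, ¬(T.anc i j ∧ T.anc j u) then p i else 0) = p a := by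
  rw [Finset.sum_eq_single_of_mem a haS]
  · rw [if_pos ⟨hau, hnear⟩]
  · intro b hb hne
    rw [if_neg]
    rintro ⟨hbu, hnb⟩
    exact hne (T.nearest_unique hb haS hbu hau hnb hnear)

lemma sum_nearest_empty (p : V → ℝ) {S : Finset V} {u : V}
    [∀ i, Decidable (T.anc i u ∧ ∀ j ∈ S, ¬(T.anc i j ∧ T.anc j u))]
    (hex : ¬ ∃ a ∈ S, T.anc a u) :
    (∑ i ∈ S, if T.anc i u ∧ ∀ j ∈ S, ¬(T.anc i j ∧ T.anc j u) then p i else 0) = 0 := by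
  refine Finset.sum_eq_zero fun i hi => ?_
  rw [if_neg]
  rintro ⟨hiu, -⟩
  exact hex ⟨i, hi, hiu⟩

end ParentTree

/-- The reward function `r(S) = Σ_{i∈S} (n_i - |∪_{j∈N_i∩S} N_j|)·p_i` is submodular:
for `S₁ ⊆ S₂` and `u ∉ S₂`, the marginal gain of adding `u` to `S₁` is at least
the marginal gain of adding `u` to `S₂`. -/
theorem reward_submodular {V : Type*} [Fintype V] [DecidableEq V] (T : ParentTree V) (p : V → ℝ)
    (hp0 : ∀ v, 0 ≤ p v) (hp1 : ∀ v, p v ≤ 1)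
    (hpanc : ∀ i j, T.anc i j → p i < p j)
    (S₁ S₂ : Finset V) (hsub : S₁ ⊆ S₂) (u : V) (hu : u ∉ S₂) :
    T.reward p (insert u S₁) - T.reward p S₁ ≥ T.reward p (insert u S₂) - T.reward p S₂ := by
  classical
  have hu1 : u ∉ S₁ := fun h => hu (hsub h)
  rw [T.marginal_eq p S₁ u hu1, T.marginal_eq p S₂ u hu]
  set c₁ : ℝ := ((T.desc u \ T.Aset S₁ u).ncard : ℝ) with hc1
  set c₂ : ℝ := ((T.desc u \ T.Aset S₂ u).ncard : ℝ) with hc2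
  have hcc : c₂ ≤ c₁ := by
    have hsub' : T.desc u \ T.Aset S₂ u ⊆ T.desc u \ T.Aset S₁ u :=
      Set.diff_subset_diff_right (T.Aset_mono hsub u)
    rw [hc1, hc2]
    exact_mod_cast Set.ncard_le_ncard hsub'
  have hc1nn : (0:ℝ) ≤ c₁ := by rw [hc1]; exact Nat.cast_nonneg _
  set q₁ : ℝ := ∑ i ∈ S₁,
    (if T.anc i u ∧ ∀ j ∈ S₁, ¬(T.anc i j ∧ T.anc j u) then p i else 0) with hq1
  set q₂ : ℝ := ∑ i ∈ S₂,
    (if T.anc i u ∧ ∀ j ∈ S₂, ¬(T.anc i j ∧ T.anc j u) then p i else 0) with hq2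
  have hq2nn : (0:ℝ) ≤ q₂ := by
    refine Finset.sum_nonneg fun i _ => ?_
    split
    · exact hp0 i
    · exact le_refl 0
  have hq2u : q₂ ≤ p u := by
    by_cases hex : ∃ a ∈ S₂, T.anc a u
    · obtain ⟨a, haS, hau⟩ := hex
      obtain ⟨b, hbS, hbu, hnb⟩ := T.exists_nearest haS hau
      rw [hq2, T.sum_nearest p hbS hbu hnb]
      exact le_of_lt (hpanc b u hbu)
    · rw [hq2, T.sum_nearest_empty p hex]; exact hp0 u
  have hq12 : q₁ ≤ q₂ := by
    by_cases hex : ∃ a ∈ S₁, T.anc a u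
    · obtain ⟨a, haS, hau⟩ := hex
      obtain ⟨b₁, hb1S, hb1u, hnb1⟩ := T.exists_nearest haS hau
      obtain ⟨b₂, hb2S, hb2u, hnb2⟩ := T.exists_nearest (hsub hb1S) hb1u
      rw [hq1, T.sum_nearest p hb1S hb1u hnb1, hq2, T.sum_nearest p hb2S hb2u hnb2]
      rcases T.anc_trichotomy hb1u hb2u with h | h | h
      · rw [h]
      · exact le_of_lt (hpanc _ _ h)
      · exact absurd ⟨h, hb1u⟩ (hnb2 b₁ (hsub hb1S))
    · rw [hq1, T.sum_nearest_empty p hex]; exact hq2nn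
  have := mul_le_mul hcc (by linarith : p u - q₂ ≤ p u - q₁) (by linarith) hc1nn
  linarith
end

section
/- If v is u's unique ancestor in S (S ∩ A_u = {v}), then the marginal gain of adding u is Δ(S,u) = (n_u - |∪_{j∈N_u∩S} N_j|)·(p_u - p_v). -/
open MeasureTheory ProbabilityTheory

open ParentTree

section Aux

variable {V : Type*}

lemma anc_trans' (T : ParentTree V) {a b c : V} (hab : T.anc a b) (hbc : T.anc b c) :
    T.anc a c := by
  obtain ⟨hne1, n, hn⟩ := hab
  obtain ⟨hne2, m, hm⟩ := hbc
  refine ⟨?_, n + m, ?_⟩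
  · rintro rfl
    have hn0 : n ≠ 0 := by rintro rfl; exact hne1 hn.symm
    have hm0 : m ≠ 0 := by rintro rfl; exact hne2 hm.symm
    have hcyc : T.parent^[n + m] a = a := by
      rw [Function.iterate_add_apply, hm, hn]
    have hroot : a = T.root := T.acyclic a (n + m) (by omega) hcyc
    have hfix : T.parent^[m] a = a := by
      rw [hroot]; exact Function.iterate_fixed T.parent_root m
    exact hne2 (hm.symm.trans hfix)
  · rw [Function.iterate_add_apply, hm, hn]

lemma anc_chain_s11 (T : ParentTree V) {w j u : V} (hj : T.anc j w) (hu : T.anc u w)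
    (hne : j ≠ u) : T.anc j u ∨ T.anc u j := by
  obtain ⟨_, m, hm⟩ := hj
  obtain ⟨_, k, hk⟩ := hu
  rcases le_total m k with h | h
  · right
    refine ⟨hne.symm, k - m, ?_⟩
    have h2 : T.parent^[k - m + m] w = T.parent^[k - m] j := by
      rw [Function.iterate_add_apply, hm]
    rw [Nat.sub_add_cancel h, hk] at h2
    exact h2.symm
  · left
    refine ⟨hne, m - k, ?_⟩
    have h2 : T.parent^[m - k + k] w = T.parent^[m - k] u := by
      rw [Function.iterate_add_apply, hk]
    rw [Nat.sub_add_cancel h, hm] at h2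
    exact h2.symm

lemma desc_mono (T : ParentTree V) {i j : V} (hij : T.anc i j) :
    T.desc j ⊆ T.desc i := fun _ hw => anc_trans' T hij hw

end Aux

/-- If `v` is `u`'s unique ancestor in `S` (`S ∩ A_u = {v}`), then the marginal gain
of adding `u` is `(n_u - |∪_{j∈N_u∩S} N_j|)·(p_u - p_v)`. -/

theorem marginal_gain_unique_ancestor {V : Type*} [Fintype V] [DecidableEq V]
    (T : ParentTree V) (p : V → ℝ)
    (S : Finset V) (u v : V) (hu : u ∉ S)
    (hv : v ∈ S) (hvu : T.anc v u) (huniq : ∀ a ∈ S, T.anc a u → a = v) :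
    T.reward p (insert u S) - T.reward p S
      = ((T.nd u : ℝ) - ((⋃ j ∈ T.desc u ∩ (S : Set V), T.desc j).ncard : ℝ))
          * (p u - p v) := by
  classical
  have huu : u ∉ T.desc u := fun h => h.1 rfl
  have huDv : u ∈ T.desc v := hvu
  have hsubuv : T.desc u ⊆ T.desc v := desc_mono T hvu
  set A : Set V := ⋃ j ∈ T.desc v ∩ (S : Set V), T.desc j with hA
  set B : Set V := ⋃ j ∈ T.desc u ∩ (S : Set V), T.desc j with hB
  have key2 : T.desc u ∩ A = B := by
    apply Set.Subset.antisymm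
    · rintro w ⟨hwu, hwA⟩
      simp only [hA, Set.mem_iUnion, Set.mem_inter_iff, exists_prop] at hwA
      obtain ⟨j, ⟨hjv, hjS⟩, hwj⟩ := hwA
      have hjne : j ≠ u := fun h => hu (h ▸ hjS)
      rcases anc_chain_s11 T hwj hwu hjne with hjau | huaj
      · exact absurd (huniq j hjS hjau).symm hjv.1
      · simp only [hB, Set.mem_iUnion, Set.mem_inter_iff, exists_prop]
        exact ⟨j, ⟨huaj, hjS⟩, hwj⟩
    · rintro w hw
      simp only [hB, Set.mem_iUnion, Set.mem_inter_iff, exists_prop] at hw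
      obtain ⟨j, ⟨hju, hjS⟩, hwj⟩ := hw
      refine ⟨desc_mono T hju hwj, ?_⟩
      simp only [hA, Set.mem_iUnion, Set.mem_inter_iff, exists_prop]
      exact ⟨j, ⟨hsubuv hju, hjS⟩, hwj⟩
  have hcard : (((T.desc u ∪ A).ncard : ℝ)) = (T.nd u : ℝ) + (A.ncard : ℝ) - (B.ncard : ℝ) := by
    have h := Set.ncard_union_add_ncard_inter (T.desc u) A (Set.toFinite _) (Set.toFinite _)
    rw [key2] at h
    have h2 : (((T.desc u ∪ A).ncard : ℝ)) + (B.ncard : ℝ)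
        = ((T.desc u).ncard : ℝ) + (A.ncard : ℝ) := by exact_mod_cast h
    have hnd : (T.nd u : ℝ) = ((T.desc u).ncard : ℝ) := rfl
    linarith
  have hset_u : T.desc u ∩ ((insert u S : Finset V) : Set V) = T.desc u ∩ (S : Set V) := by
    rw [Finset.coe_insert, Set.inter_insert_of_notMem huu]
  have hUv : (⋃ j ∈ T.desc v ∩ ((insert u S : Finset V) : Set V), T.desc j) = T.desc u ∪ A := by
    rw [Finset.coe_insert, Set.inter_insert_of_mem huDv, Set.biUnion_insert, hA]
  have hset_i : ∀ i ∈ S, i ≠ v →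
      T.desc i ∩ ((insert u S : Finset V) : Set V) = T.desc i ∩ (S : Set V) := by
    intro i hi hne
    rw [Finset.coe_insert, Set.inter_insert_of_notMem]
    intro hui
    exact hne (huniq i hi hui)
  unfold ParentTree.reward
  rw [Finset.sum_insert hu, hset_u, ← hB]
  have hsum : (∑ i ∈ S, ((T.nd i : ℝ)
        - ((⋃ j ∈ T.desc i ∩ ((insert u S : Finset V) : Set V), T.desc j).ncard : ℝ)) * p i)
      - (∑ i ∈ S, ((T.nd i : ℝ)
        - ((⋃ j ∈ T.desc i ∩ (S : Set V), T.desc j).ncard : ℝ)) * p i)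
      = -(((T.nd u : ℝ) - (B.ncard : ℝ)) * p v) := by
    rw [← Finset.sum_sub_distrib]
    rw [Finset.sum_eq_single_of_mem v hv]
    · rw [hUv, ← hA]
      linear_combination (-(p v)) * hcard
    · intro i hi hne
      rw [hset_i i hi hne]
      ring
  linear_combination hsum
end

section
/- For a vaccinated set S and node u with closest ancestor v in S, the set identity N_u ∩ ∪_{j ∈ N_v ∩ S} N_j = N_u ∩ ∪_{j ∈ N_u ∩ S} N_j holds. -/
open MeasureTheory ProbabilityTheory

open ParentTree

lemma anc_trans'_s13 {V : Type*} (T : ParentTree V) {i j k : V}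
    (h1 : T.anc i j) (h2 : T.anc j k) : T.anc i k := by
  obtain ⟨hij, n, hn⟩ := h1
  obtain ⟨hjk, m, hm⟩ := h2
  have hnm : T.parent^[n + m] k = i := by
    rw [Function.iterate_add_apply, hm, hn]
  refine ⟨?_, n + m, hnm⟩
  rintro rfl
  have hn0 : 0 < n := by
    rcases Nat.eq_zero_or_pos n with rfl | h
    · exact absurd hn.symm hij
    · exact h
  have hroot : i = T.root := T.acyclic i (n + m) (by omega) hnm
  rw [hroot, Function.iterate_fixed T.parent_root] at hm
  exact hjk (hroot.trans hm).symm

lemma anc_comparable' {V : Type*} (T : ParentTree V) {i j x : V}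
    (h1 : T.anc i x) (h2 : T.anc j x) : i = j ∨ T.anc i j ∨ T.anc j i := by
  obtain ⟨hix, n, hn⟩ := h1
  obtain ⟨hjx, m, hm⟩ := h2
  rcases eq_or_ne i j with rfl | hij
  · exact Or.inl rfl
  rcases le_total n m with h | h
  · exact Or.inr <| Or.inr ⟨hij.symm, m - n, by
      rw [← hn, ← Function.iterate_add_apply, Nat.sub_add_cancel h, hm]⟩
  · exact Or.inr <| Or.inl ⟨hij, n - m, by
      rw [← hm, ← Function.iterate_add_apply, Nat.sub_add_cancel h, hn]⟩

/-- For a vaccinated set `S` and a node `u ∉ S` whose closest ancestor in `S` is `v`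
(no node of `S` lies strictly between `v` and `u`), the set identity
`N_u ∩ ∪_{j ∈ N_v ∩ S} N_j = N_u ∩ ∪_{j ∈ N_u ∩ S} N_j` holds. -/
theorem desc_inter_union_closest_ancestor {V : Type*} [Fintype V] [DecidableEq V]
    (T : ParentTree V) (S : Finset V) (u v : V) (hu : u ∉ S) (hvu : T.anc v u)
    (hclosest : ∀ a ∈ S, T.anc a u → ¬ T.anc v a) :
    T.desc u ∩ ⋃ j ∈ T.desc v ∩ (S : Set V), T.desc j
      = T.desc u ∩ ⋃ j ∈ T.desc u ∩ (S : Set V), T.desc j := by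
  ext x
  simp only [Set.mem_inter_iff, Set.mem_iUnion, exists_prop]
  constructor
  · rintro ⟨hux, j, ⟨hvj, hjS⟩, hjx⟩
    refine ⟨hux, j, ⟨?_, hjS⟩, hjx⟩
    rcases anc_comparable' T hux hjx with rfl | huj | hju
    · exact absurd hjS hu
    · exact huj
    · exact absurd hvj (hclosest j hjS hju)
  · rintro ⟨hux, j, ⟨huj, hjS⟩, hjx⟩
    exact ⟨hux, j, ⟨anc_trans'_s13 T hvu huj, hjS⟩, hjx⟩
end
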